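/- The function V(u,v) = (u+1)²(v+1)² is a global Lyapunov function for the planar system u' = uv(u−v)(u+1) − δu, v' = uv(v−u)(v+1) − δv with δ > 0 on the nonnegative quadrant: its derivative along trajectories satisfies ∇V·(f,g) = −2δ(u+1)(v+1)[u(v+1) + v(u+1)] ≤ 0 for all u,v ≥ 0, with equality only at points where u = v = 0 or the bracketed term vanishes. -/
import Mathlib

open Filter Topology

/-- `V(u,v) = (u+1)²(v+1)²` is a global Lyapunov function for the
Weinberger kinetics: along trajectories
`∇V·(f,g) = −2δ(u+1)(v+1)[u(v+1) + v(u+1)] ≤ 0` on the quadrant, with equality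
only where the bracketed term vanishes (equivalently `u = v = 0`). -/
theorem stmt13 (δ : ℝ) (hδ : 0 < δ) :
    ∀ u v : ℝ, 0 ≤ u → 0 ≤ v →
      (2 * (u + 1) * (v + 1) ^ 2) * (u * v * (u - v) * (u + 1) - δ * u) +
          (2 * (u + 1) ^ 2 * (v + 1)) * (u * v * (v - u) * (v + 1) - δ * v) =
        -2 * δ * (u + 1) * (v + 1) * (u * (v + 1) + v * (u + 1)) ∧
      (2 * (u + 1) * (v + 1) ^ 2) * (u * v * (u - v) * (u + 1) - δ * u) +
          (2 * (u + 1) ^ 2 * (v + 1)) * (u * v * (v - u) * (v + 1) - δ * v) ≤ 0 ∧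
      ((2 * (u + 1) * (v + 1) ^ 2) * (u * v * (u - v) * (u + 1) - δ * u) +
          (2 * (u + 1) ^ 2 * (v + 1)) * (u * v * (v - u) * (v + 1) - δ * v) = 0 ↔
        u * (v + 1) + v * (u + 1) = 0) := by
  intro u v hu hv
  have h1 : (2 * (u + 1) * (v + 1) ^ 2) * (u * v * (u - v) * (u + 1) - δ * u) +
      (2 * (u + 1) ^ 2 * (v + 1)) * (u * v * (v - u) * (v + 1) - δ * v) =
      -2 * δ * (u + 1) * (v + 1) * (u * (v + 1) + v * (u + 1)) := by ring
  have hup : (0:ℝ) < u + 1 := by linarith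
  have hvp : (0:ℝ) < v + 1 := by linarith
  have hb : 0 ≤ u * (v + 1) + v * (u + 1) := by positivity
  refine ⟨h1, ?_, ?_⟩
  · rw [h1]; nlinarith [mul_pos hup hvp, mul_pos hδ (mul_pos hup hvp)]
  · rw [h1]
    constructor
    · intro h
      have h2 : δ * ((u + 1) * (v + 1)) * (u * (v + 1) + v * (u + 1)) = 0 := by nlinarith
      have := mul_pos hδ (mul_pos hup hvp)
      rcases mul_eq_zero.1 h2 with h3 | h3
      · exact absurd h3 (ne_of_gt this)
      · exact h3
    · intro h; rw [h]; ring
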